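/- arXiv:1704.06683 — 5 statements merged into one kernel-verified Lean document; each statement's English description precedes it below -/
import Mathlib

section
/- Suppose ẑ > 0 satisfies ẑ·ω''(ẑ) = ω'(ẑ) (equivalently φ₁(ẑ) = 1). Then for every complex number z with |z| ≤ ẑ, |z·ω'(z)| + |2ω(z) − z·ω'(z)| ≤ 2·ω(|z|). -/
open scoped BigOperators

/-- The `k`-th derivative of `ω(z) = Σ_{d ∈ Δ} z^d / d!`, as a real function. -/
noncomputable def omegaD (Δ : Set ℕ) (k : ℕ) (z : ℝ) : ℝ :=
  ∑' d : Δ, if k ≤ (d : ℕ) then z ^ ((d : ℕ) - k) / Nat.factorial ((d : ℕ) - k) else 0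

/-- The `k`-th derivative of `ω(z) = Σ_{d ∈ Δ} z^d / d!`, as a complex entire function. -/
noncomputable def omegaC (Δ : Set ℕ) (k : ℕ) (z : ℂ) : ℂ :=
  ∑' d : Δ, if k ≤ (d : ℕ) then z ^ ((d : ℕ) - k) / Nat.factorial ((d : ℕ) - k) else 0

private lemma natsq_le (n : ℕ) : ((n:ℝ))^2 ≤ 4^n := by
  have h : (n:ℝ) ≤ 2^n := by exact_mod_cast (Nat.lt_two_pow_self (n := n)).le
  calc ((n:ℝ))^2 ≤ ((2:ℝ)^n)^2 := pow_le_pow_left₀ (Nat.cast_nonneg n) h 2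
    _ = 4^n := by rw [← pow_mul, mul_comm, pow_mul]; norm_num

private lemma summable_poly (y : ℝ) (hy : 0 ≤ y) :
    Summable (fun n : ℕ => ((n:ℝ)^2+1) * y^n / n.factorial) := by
  have h1 : Summable (fun n : ℕ => (4*y)^n / n.factorial) := Real.summable_pow_div_factorial _
  have h2 : Summable (fun n : ℕ => y^n / n.factorial) := Real.summable_pow_div_factorial _
  refine Summable.of_nonneg_of_le (fun n => by positivity) (fun n => ?_) (h1.add h2)
  rw [← add_div]
  gcongr
  have h3 : (n:ℝ)^2 * y^n ≤ (4*y)^n := by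
    rw [mul_pow]
    exact mul_le_mul_of_nonneg_right (natsq_le n) (pow_nonneg hy n)
  nlinarith [pow_nonneg hy n]

private lemma sumR {f : ℕ → ℝ} (y C : ℝ) (hy : 0 ≤ y)
    (h : ∀ n, |f n| ≤ C*(((n:ℝ)^2+1) * y^n / n.factorial)) : Summable f := by
  rw [← summable_abs_iff]
  exact Summable.of_nonneg_of_le (fun n => abs_nonneg _) h ((summable_poly y hy).mul_left C)

private lemma sumC {f : ℕ → ℂ} (y C : ℝ) (hy : 0 ≤ y)
    (h : ∀ n, ‖f n‖ ≤ C*(((n:ℝ)^2+1) * y^n / n.factorial)) :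
    Summable (fun n => ‖f n‖) :=
  Summable.of_nonneg_of_le (fun n => norm_nonneg _) h ((summable_poly y hy).mul_left C)

private lemma unit_exists (w : ℂ) : ∃ u : ℂ, ‖u‖ = 1 ∧ u * w = (‖w‖ : ℂ) := by
  by_cases hw : w = 0
  · exact ⟨1, by simp [hw]⟩
  · refine ⟨(‖w‖:ℂ)/w, ?_, by field_simp⟩
    rw [norm_div, Complex.norm_real, Real.norm_eq_abs, abs_norm,
      div_self (norm_ne_zero_iff.mpr hw)]

private lemma coef_sq (u v : ℂ) (hu : ‖u‖ = 1) (hv : ‖v‖ = 1) (a : ℝ) :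
    ‖(a:ℂ) * u + ((2 - a : ℝ):ℂ) * v‖^2 = 4 + a * (a - 2) * ‖u - v‖^2 := by
  have hu' : u.re^2 + u.im^2 = 1 := by
    have := Complex.sq_norm u
    rw [Complex.normSq_apply] at this
    rw [hu] at this
    nlinarith [this]
  have hv' : v.re^2 + v.im^2 = 1 := by
    have := Complex.sq_norm v
    rw [Complex.normSq_apply] at this
    rw [hv] at this
    nlinarith [this]
  rw [Complex.sq_norm, Complex.sq_norm,
    Complex.normSq_apply, Complex.normSq_apply]
  simp only [Complex.add_re, Complex.add_im, Complex.mul_re, Complex.mul_im, Complex.sub_re,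
    Complex.sub_im, Complex.ofReal_re, Complex.ofReal_im]
  linear_combination (2*a) * hu' + (4-2*a) * hv'

private lemma coef_bound (u v : ℂ) (hu : ‖u‖ = 1) (hv : ‖v‖ = 1) (a : ℝ) :
    ‖(a:ℂ) * u + ((2 - a : ℝ):ℂ) * v‖ ≤ 2 + a * (a - 2) * ‖u - v‖^2 / 4 := by
  have hsq := coef_sq u v hu hv a
  set N := ‖(a:ℂ) * u + ((2 - a : ℝ):ℂ) * v‖ with hN
  set s := a * (a - 2) * ‖u - v‖^2 with hs
  have hN0 : 0 ≤ N := norm_nonneg _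
  have hs4 : -4 ≤ s := by nlinarith [sq_nonneg N]
  nlinarith [sq_nonneg (N - 2 - s/4), sq_nonneg s]

/-- summand identity for `z·ω'`. -/
private lemma L1 (z : ℂ) (n : ℕ) :
    z * (if 1 ≤ n then z^(n-1) / (Nat.factorial (n-1) : ℂ) else 0)
      = (n:ℂ) * z^n / (Nat.factorial n : ℂ) := by
  match n with
  | 0 => simp
  | (m+1) =>
    rw [if_pos (by omega : 1 ≤ m+1)]
    simp only [Nat.add_sub_cancel, Nat.factorial_succ]
    have hf : ((Nat.factorial m : ℂ)) ≠ 0 := Nat.cast_ne_zero.mpr (Nat.factorial_ne_zero m)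
    have hm1 : ((m:ℂ)+1) ≠ 0 := by
      have := Nat.cast_add_one_ne_zero (R := ℂ) m
      simpa using this
    push_cast
    rw [pow_succ]
    field_simp

private lemma L2' (zh : ℝ) (n : ℕ) :
    zh * (if 2 ≤ n then zh^(n-2) / (Nat.factorial (n-2) : ℝ) else 0)
      = (if 2 ≤ n then zh^(n-1) / (Nat.factorial (n-2) : ℝ) else 0) := by
  by_cases h : 2 ≤ n
  · rw [if_pos h, if_pos h]
    have : n - 1 = (n-2) + 1 := by omega
    rw [this, pow_succ]
    ring
  · simp [h]

/-- E2 - E1 = e -/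
private lemma L2 (zh : ℝ) (n : ℕ) :
    (if 2 ≤ n then zh^(n-1) / (Nat.factorial (n-2) : ℝ) else 0)
      - (if 1 ≤ n then zh^(n-1) / (Nat.factorial (n-1) : ℝ) else 0)
      = (if 1 ≤ n then ((n:ℝ) - 2) * zh^(n-1) / (Nat.factorial (n-1) : ℝ) else 0) := by
  match n with
  | 0 => norm_num
  | 1 => norm_num
  | (m+2) =>
    rw [if_pos (by omega : 2 ≤ m+2), if_pos (by omega : 1 ≤ m+2), if_pos (by omega : 1 ≤ m+2)]
    have e1 : m + 2 - 1 = m + 1 := by omega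
    have e2 : m + 2 - 2 = m := by omega
    rw [e1, e2, Nat.factorial_succ]
    have hf : ((Nat.factorial m : ℝ)) ≠ 0 := Nat.cast_ne_zero.mpr (Nat.factorial_ne_zero m)
    push_cast
    field_simp
    ring

/-- termwise: n(n-2) r^n/n! ≤ r * e n -/
private lemma L3 (r zh : ℝ) (hr0 : 0 ≤ r) (hrzh : r ≤ zh) (n : ℕ) :
    (n:ℝ) * ((n:ℝ) - 2) * r^n / (Nat.factorial n : ℝ)
      ≤ r * (if 1 ≤ n then ((n:ℝ) - 2) * zh^(n-1) / (Nat.factorial (n-1) : ℝ) else 0) := by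
  match n with
  | 0 => norm_num
  | 1 => norm_num
  | (m+2) =>
    rw [if_pos (by omega : 1 ≤ m+2)]
    have e1 : m + 2 - 1 = m + 1 := by omega
    rw [e1]
    have hfac : ((Nat.factorial (m+2) : ℝ)) = (m+2) * (Nat.factorial (m+1) : ℝ) := by
      rw [Nat.factorial_succ]; push_cast; ring
    have hf1 : (0:ℝ) < (Nat.factorial (m+1) : ℝ) :=
      Nat.cast_pos.mpr (Nat.factorial_pos _)
    have hpow : r^(m+1) ≤ zh^(m+1) := pow_le_pow_left₀ hr0 hrzh _
    have key : ((m+2:ℕ):ℝ) * (((m+2:ℕ):ℝ) - 2) * r^(m+2) / (Nat.factorial (m+2) : ℝ)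
        = (m:ℝ) * (r * r^(m+1)) / (Nat.factorial (m+1) : ℝ) := by
      rw [hfac, pow_succ']
      push_cast
      have hm2 : ((m:ℝ)+2) ≠ 0 := by positivity
      field_simp
      ring
    rw [key]
    calc (m:ℝ) * (r * r^(m+1)) / (Nat.factorial (m+1) : ℝ)
        ≤ (m:ℝ) * (r * zh^(m+1)) / (Nat.factorial (m+1) : ℝ) := by gcongr
      _ = r * (((m+2:ℕ):ℝ) - 2) * zh^(m+1) / (Nat.factorial (m+1) : ℝ) := by push_cast; ring
      _ = r * ((((m+2:ℕ):ℝ) - 2) * zh^(m+1) / (Nat.factorial (m+1) : ℝ)) := by ring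

/-- if `ẑ·ω''(ẑ) = ω'(ẑ)` (i.e. `φ₁(ẑ) = 1`), then for every complex `z`
with `|z| ≤ ẑ`, `|z ω'(z)| + |2 ω(z) − z ω'(z)| ≤ 2 ω(|z|)`. -/
theorem stmt12 (Δ : Set ℕ) (hΔ : 1 ∈ Δ) (zh : ℝ) (hzh : 0 < zh)
    (heq : zh * omegaD Δ 2 zh = omegaD Δ 1 zh) :
    ∀ z : ℂ, ‖z‖ ≤ zh →
      ‖z * omegaC Δ 1 z‖ + ‖2 * omegaC Δ 0 z - z * omegaC Δ 1 z‖ ≤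
        2 * omegaD Δ 0 ‖z‖ := by
  intro z hz
  set r : ℝ := ‖z‖ with hrdef
  have hzr : ‖z‖ = r := hrdef.symm
  have hr0 : (0:ℝ) ≤ r := by rw [← hzr]; exact norm_nonneg z
  have hzh0 : (0:ℝ) ≤ zh := hzh.le
  obtain ⟨u, hu1, huF⟩ := unit_exists (z * omegaC Δ 1 z)
  obtain ⟨v, hv1, hvG⟩ := unit_exists (2 * omegaC Δ 0 z - z * omegaC Δ 1 z)
  set t2 : ℝ := ‖u - v‖^2 with ht2def
  have ht20 : 0 ≤ t2 := sq_nonneg _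
  -- ℕ-level summability facts
  have sExpN : Summable (fun n : ℕ => r^n / (n.factorial : ℝ)) :=
    Real.summable_pow_div_factorial r
  have sNormN : Summable (fun n : ℕ =>
      ‖(u * (n:ℂ) + v * (2 - (n:ℂ))) * z^n / (n.factorial : ℂ)‖) := by
    apply sumC r 3 hr0
    intro n
    rw [norm_div, norm_mul, norm_pow, Complex.norm_natCast, hzr]
    have hn2 : ‖(2 - (n:ℂ))‖ ≤ 2 + (n:ℝ) := by
      calc ‖(2 - (n:ℂ))‖ ≤ ‖(2:ℂ)‖ + ‖(n:ℂ)‖ := norm_sub_le _ _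
        _ = 2 + (n:ℝ) := by rw [Complex.norm_natCast]; norm_num
    have hc : ‖u * (n:ℂ) + v * (2 - (n:ℂ))‖ ≤ 3*((n:ℝ)^2+1) := by
      calc ‖u * (n:ℂ) + v * (2 - (n:ℂ))‖ ≤ ‖u * (n:ℂ)‖ + ‖v * (2 - (n:ℂ))‖ := norm_add_le _ _
        _ = (n:ℝ) + ‖(2 - (n:ℂ))‖ := by
            rw [norm_mul, norm_mul, hu1, hv1, one_mul, one_mul, Complex.norm_natCast]
        _ ≤ (n:ℝ) + (2 + (n:ℝ)) := by linarith
        _ ≤ 3*((n:ℝ)^2+1) := by nlinarith [sq_nonneg ((n:ℝ)-1), Nat.cast_nonneg (α := ℝ) n]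
    calc ‖u * (n:ℂ) + v * (2 - (n:ℂ))‖ * r^n / (n.factorial : ℝ)
        ≤ (3*((n:ℝ)^2+1)) * r^n / (n.factorial : ℝ) := by gcongr
      _ = 3*(((n:ℝ)^2+1) * r^n / (n.factorial : ℝ)) := by ring
  have sAN : Summable (fun n : ℕ => (n:ℂ) * z^n / (n.factorial : ℂ)) := by
    apply Summable.of_norm
    apply sumC r 3 hr0
    intro n
    rw [norm_div, norm_mul, norm_pow, Complex.norm_natCast, Complex.norm_natCast, hzr]
    calc (n:ℝ) * r^n / (n.factorial : ℝ) ≤ (3*((n:ℝ)^2+1)) * r^n / (n.factorial : ℝ) := by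
          gcongr
          nlinarith [sq_nonneg ((n:ℝ)-1), Nat.cast_nonneg (α := ℝ) n]
      _ = 3*(((n:ℝ)^2+1) * r^n / (n.factorial : ℝ)) := by ring
  have sBN : Summable (fun n : ℕ => z^n / (n.factorial : ℂ)) := by
    apply Summable.of_norm
    apply sumC r 3 hr0
    intro n
    rw [norm_div, norm_pow, Complex.norm_natCast, hzr]
    calc r^n / (n.factorial : ℝ) ≤ (3*((n:ℝ)^2+1)) * r^n / (n.factorial : ℝ) := by
          rw [div_le_div_iff_of_pos_right (by positivity)]
          nlinarith [pow_nonneg hr0 n, sq_nonneg (n:ℝ)]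
      _ = 3*(((n:ℝ)^2+1) * r^n / (n.factorial : ℝ)) := by ring
  have sE1N : Summable (fun n : ℕ =>
      if 1 ≤ n then zh^(n-1) / (Nat.factorial (n-1) : ℝ) else 0) := by
    rw [← summable_nat_add_iff 1]
    refine (summable_congr fun n => ?_).mpr (Real.summable_pow_div_factorial zh)
    simp
  have sE2N : Summable (fun n : ℕ =>
      if 2 ≤ n then zh^(n-1) / (Nat.factorial (n-2) : ℝ) else 0) := by
    rw [← summable_nat_add_iff 2]
    refine (summable_congr fun n => ?_).mpr ((Real.summable_pow_div_factorial zh).mul_left zh)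
    have h1 : n + 2 - 1 = n + 1 := by omega
    have h2 : n + 2 - 2 = n := by omega
    rw [if_pos (by omega : 2 ≤ n+2), h1, h2, pow_succ']
    ring
  have sEN : Summable (fun n : ℕ =>
      if 1 ≤ n then ((n:ℝ) - 2) * zh^(n-1) / (Nat.factorial (n-1) : ℝ) else 0) := by
    refine (summable_congr fun n => (L2 zh n)).mp (sE2N.sub sE1N)
  -- subtype versions
  have sNormD : Summable (fun d : Δ =>
      ‖(u * ((d:ℕ):ℂ) + v * (2 - ((d:ℕ):ℂ))) * z^(d:ℕ) / (((d:ℕ).factorial) : ℂ)‖) :=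
    sNormN.subtype Δ
  have sAD : Summable (fun d : Δ => ((d:ℕ):ℂ) * z^(d:ℕ) / (((d:ℕ).factorial) : ℂ)) :=
    sAN.subtype Δ
  have sBD : Summable (fun d : Δ => z^(d:ℕ) / (((d:ℕ).factorial) : ℂ)) :=
    sBN.subtype Δ
  have sExpD : Summable (fun d : Δ => r^(d:ℕ) / (((d:ℕ).factorial) : ℝ)) :=
    sExpN.subtype Δ
  have sE1D : Summable (fun d : Δ =>
      if 1 ≤ (d:ℕ) then zh^((d:ℕ)-1) / (Nat.factorial ((d:ℕ)-1) : ℝ) else 0) :=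
    sE1N.subtype Δ
  have sE2D : Summable (fun d : Δ =>
      if 2 ≤ (d:ℕ) then zh^((d:ℕ)-1) / (Nat.factorial ((d:ℕ)-2) : ℝ) else 0) :=
    sE2N.subtype Δ
  have sED : Summable (fun d : Δ =>
      if 1 ≤ (d:ℕ) then (((d:ℕ):ℝ) - 2) * zh^((d:ℕ)-1) / (Nat.factorial ((d:ℕ)-1) : ℝ) else 0) :=
    sEN.subtype Δ
  -- representations as series
  have hF : z * omegaC Δ 1 z = ∑' d : Δ, ((d:ℕ):ℂ) * z^(d:ℕ) / (((d:ℕ).factorial) : ℂ) := by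
    rw [omegaC, ← tsum_mul_left]
    exact tsum_congr fun d => L1 z (d:ℕ)
  have h0 : omegaC Δ 0 z = ∑' d : Δ, z^(d:ℕ) / (((d:ℕ).factorial) : ℂ) := by
    rw [omegaC]
    exact tsum_congr fun d => by norm_num
  have hW : ((‖z * omegaC Δ 1 z‖ + ‖2 * omegaC Δ 0 z - z * omegaC Δ 1 z‖ : ℝ) : ℂ)
      = ∑' d : Δ, (u * ((d:ℕ):ℂ) + v * (2 - ((d:ℕ):ℂ))) * z^(d:ℕ) / (((d:ℕ).factorial) : ℂ) := by
    have hG : 2 * omegaC Δ 0 z - z * omegaC Δ 1 z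
        = ∑' d : Δ, ((2:ℂ) - ((d:ℕ):ℂ)) * z^(d:ℕ) / (((d:ℕ).factorial) : ℂ) := by
      rw [h0, hF, ← tsum_mul_left, ← Summable.tsum_sub (sBD.mul_left 2) sAD]
      exact tsum_congr fun d => by ring
    have hBG : Summable (fun d : Δ => ((2:ℂ) - ((d:ℕ):ℂ)) * z^(d:ℕ) / (((d:ℕ).factorial) : ℂ)) := by
      refine (summable_congr fun d => ?_).mp ((sBD.mul_left 2).sub sAD)
      ring
    push_cast
    rw [← huF, ← hvG, hG, hF, ← tsum_mul_left, ← tsum_mul_left,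
      ← Summable.tsum_add (sAD.mul_left u) (hBG.mul_left v)]
    exact tsum_congr fun d => by ring
  -- the key vanishing sum from heq
  have he0 : (∑' d : Δ,
      if 1 ≤ (d:ℕ) then (((d:ℕ):ℝ) - 2) * zh^((d:ℕ)-1) / (Nat.factorial ((d:ℕ)-1) : ℝ) else 0)
      = 0 := by
    have hE2 : zh * omegaD Δ 2 zh
        = ∑' d : Δ, (if 2 ≤ (d:ℕ) then zh^((d:ℕ)-1) / (Nat.factorial ((d:ℕ)-2) : ℝ) else 0) := by
      rw [omegaD, ← tsum_mul_left]
      exact tsum_congr fun d => L2' zh (d:ℕ)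
    have hE1 : omegaD Δ 1 zh
        = ∑' d : Δ, (if 1 ≤ (d:ℕ) then zh^((d:ℕ)-1) / (Nat.factorial ((d:ℕ)-1) : ℝ) else 0) := rfl
    calc (∑' d : Δ,
        if 1 ≤ (d:ℕ) then (((d:ℕ):ℝ) - 2) * zh^((d:ℕ)-1) / (Nat.factorial ((d:ℕ)-1) : ℝ) else 0)
        = ∑' d : Δ, ((if 2 ≤ (d:ℕ) then zh^((d:ℕ)-1) / (Nat.factorial ((d:ℕ)-2) : ℝ) else 0)
            - (if 1 ≤ (d:ℕ) then zh^((d:ℕ)-1) / (Nat.factorial ((d:ℕ)-1) : ℝ) else 0)) :=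
          tsum_congr fun d => (L2 zh (d:ℕ)).symm
      _ = (∑' d : Δ, if 2 ≤ (d:ℕ) then zh^((d:ℕ)-1) / (Nat.factorial ((d:ℕ)-2) : ℝ) else 0)
          - (∑' d : Δ, if 1 ≤ (d:ℕ) then zh^((d:ℕ)-1) / (Nat.factorial ((d:ℕ)-1) : ℝ) else 0) :=
          Summable.tsum_sub sE2D sE1D
      _ = 0 := by rw [← hE2, ← hE1, heq, sub_self]
  -- rewrite the goal
  have habs : ‖z * omegaC Δ 1 z‖ + ‖2 * omegaC Δ 0 z - z * omegaC Δ 1 z‖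
      = ‖((‖z * omegaC Δ 1 z‖ + ‖2 * omegaC Δ 0 z - z * omegaC Δ 1 z‖ : ℝ) : ℂ)‖ := by
    rw [Complex.norm_real, Real.norm_eq_abs, abs_of_nonneg (by positivity)]
  rw [habs, hW]
  -- termwise bound
  have termB : ∀ d : Δ,
      ‖(u * ((d:ℕ):ℂ) + v * (2 - ((d:ℕ):ℂ))) * z^(d:ℕ) / (((d:ℕ).factorial) : ℂ)‖
        ≤ 2 * (r^(d:ℕ) / (((d:ℕ).factorial) : ℝ)) + (t2*r/4) *
          (if 1 ≤ (d:ℕ) then (((d:ℕ):ℝ) - 2) * zh^((d:ℕ)-1) / (Nat.factorial ((d:ℕ)-1) : ℝ) else 0) := by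
    intro d
    rw [norm_div, norm_mul, norm_pow, Complex.norm_natCast, hzr]
    have hcb : ‖u * (((d:ℕ)):ℂ) + v * (2 - (((d:ℕ)):ℂ))‖
        ≤ 2 + ((d:ℕ):ℝ) * (((d:ℕ):ℝ) - 2) * t2 / 4 := by
      have h := coef_bound u v hu1 hv1 ((d:ℕ):ℝ)
      have hrw : ((((d:ℕ):ℝ)):ℂ) * u + (((2 - ((d:ℕ):ℝ)):ℝ):ℂ) * v
          = u * (((d:ℕ)):ℂ) + v * (2 - (((d:ℕ)):ℂ)) := by push_cast; ring
      rw [hrw, ← ht2def] at h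
      linarith [h]
    have hL3 := L3 r zh hr0 hz (d:ℕ)
    have hp : (0:ℝ) ≤ r^(d:ℕ) / (((d:ℕ).factorial) : ℝ) := by positivity
    have h1 := mul_le_mul_of_nonneg_right hcb hp
    have h2 := mul_le_mul_of_nonneg_left hL3 (by positivity : (0:ℝ) ≤ t2/4)
    ring_nf at h1 h2 ⊢
    nlinarith [h1, h2]
  have sTargetD : Summable (fun d : Δ => 2 * (r^(d:ℕ) / (((d:ℕ).factorial) : ℝ)) + (t2*r/4) *
      (if 1 ≤ (d:ℕ) then (((d:ℕ):ℝ) - 2) * zh^((d:ℕ)-1) / (Nat.factorial ((d:ℕ)-1) : ℝ) else 0)) :=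
    (sExpD.mul_left 2).add (sED.mul_left (t2*r/4))
  calc ‖∑' d : Δ, (u * ((d:ℕ):ℂ) + v * (2 - ((d:ℕ):ℂ))) * z^(d:ℕ) / (((d:ℕ).factorial) : ℂ)‖
      ≤ ∑' d : Δ, ‖(u * ((d:ℕ):ℂ) + v * (2 - ((d:ℕ):ℂ))) * z^(d:ℕ) / (((d:ℕ).factorial) : ℂ)‖ :=
        norm_tsum_le_tsum_norm sNormD
    _ ≤ ∑' d : Δ, (2 * (r^(d:ℕ) / (((d:ℕ).factorial) : ℝ)) + (t2*r/4) *
          (if 1 ≤ (d:ℕ) then (((d:ℕ):ℝ) - 2) * zh^((d:ℕ)-1) / (Nat.factorial ((d:ℕ)-1) : ℝ) else 0)) :=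
        Summable.tsum_le_tsum termB sNormD sTargetD
    _ = 2 * omegaD Δ 0 r := by
        rw [Summable.tsum_add (sExpD.mul_left 2) (sED.mul_left (t2*r/4)), tsum_mul_left, tsum_mul_left,
          he0, mul_zero, add_zero, omegaD]
        congr 1
end

section
/- Let γ > β > 0 be real numbers with 1/β − 1/γ ≥ 2. Then for every complex number z with |z| = 1, |1 + γz| + |1 − βz| ≤ 2 + γ − β. -/
/-- if `γ > β > 0` and `1/β − 1/γ ≥ 2`, then for every complex `z` with
`|z| = 1`, `|1 + γz| + |1 − βz| ≤ 2 + γ − β`. -/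
theorem stmt13 (γ β : ℝ) (hβ : 0 < β) (hβγ : β < γ) (h : 2 ≤ 1 / β - 1 / γ) :
    ∀ z : ℂ, ‖z‖ = 1 →
      ‖1 + (γ : ℂ) * z‖ + ‖1 - (β : ℂ) * z‖ ≤ 2 + γ - β := by
  intro z hz
  have hγ0 : 0 < γ := hβ.trans hβγ
  have hbg : 0 < β * γ := mul_pos hβ hγ0
  have h' : 2 * (β * γ) ≤ γ - β := by
    rw [div_sub_div _ _ (ne_of_gt hβ) (ne_of_gt hγ0), le_div_iff₀ hbg] at h
    linarith
  have hβ1 : β < 1 / 2 := by nlinarith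
  have h1γ : (0:ℝ) < 1 + γ := by linarith
  have h1β : (0:ℝ) < 1 - β := by linarith
  set x := z.re with hxdef
  have hx2 : x ^ 2 + z.im ^ 2 = 1 := by
    have h1 : Complex.normSq z = 1 := by
      rw [← Complex.sq_norm, hz]; norm_num
    rw [Complex.normSq_apply] at h1
    linear_combination h1
  have hx1 : x ≤ 1 := by nlinarith [sq_nonneg z.im]
  have hA : ‖1 + (γ : ℂ) * z‖ = Real.sqrt (1 + 2 * γ * x + γ ^ 2) := by
    rw [Complex.norm_def, Complex.normSq_apply]
    congr 1
    simp [Complex.add_re, Complex.add_im, Complex.mul_re, Complex.mul_im]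
    linear_combination (γ ^ 2) * hx2
  have hB : ‖1 - (β : ℂ) * z‖ = Real.sqrt (1 - 2 * β * x + β ^ 2) := by
    rw [Complex.norm_def, Complex.normSq_apply]
    congr 1
    simp [Complex.sub_re, Complex.sub_im, Complex.mul_re, Complex.mul_im]
    linear_combination (β ^ 2) * hx2
  have hAnn : (0:ℝ) ≤ (1 + γ) - γ * (1 - x) / (1 + γ) := by
    rw [sub_nonneg, div_le_iff₀ h1γ]
    nlinarith
  have hBnn : (0:ℝ) ≤ (1 - β) + β * (1 - x) / (1 - β) := by
    have : 0 ≤ β * (1 - x) / (1 - β) :=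
      div_nonneg (mul_nonneg hβ.le (by linarith)) h1β.le
    linarith
  have bA : Real.sqrt (1 + 2 * γ * x + γ ^ 2) ≤ (1 + γ) - γ * (1 - x) / (1 + γ) := by
    have hs : Real.sqrt (1 + 2 * γ * x + γ ^ 2) ≤
        Real.sqrt (((1 + γ) - γ * (1 - x) / (1 + γ)) ^ 2) := by
      apply Real.sqrt_le_sqrt
      have e : (1 + γ) * (γ * (1 - x) / (1 + γ)) = γ * (1 - x) := by
        field_simp
      nlinarith [e, sq_nonneg (γ * (1 - x) / (1 + γ))]
    rwa [Real.sqrt_sq hAnn] at hs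
  have bB : Real.sqrt (1 - 2 * β * x + β ^ 2) ≤ (1 - β) + β * (1 - x) / (1 - β) := by
    have hs : Real.sqrt (1 - 2 * β * x + β ^ 2) ≤
        Real.sqrt (((1 - β) + β * (1 - x) / (1 - β)) ^ 2) := by
      apply Real.sqrt_le_sqrt
      have e : (1 - β) * (β * (1 - x) / (1 - β)) = β * (1 - x) := by
        field_simp
      nlinarith [e, sq_nonneg (β * (1 - x) / (1 - β))]
    rwa [Real.sqrt_sq hBnn] at hs
  have key : β * (1 - x) / (1 - β) ≤ γ * (1 - x) / (1 + γ) := by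
    rw [div_le_div_iff₀ h1β h1γ]
    nlinarith [mul_nonneg (sub_nonneg.mpr hx1) (by linarith : (0:ℝ) ≤ γ - β - 2 * (β * γ))]
  rw [hA, hB]
  linarith
end

section
/- For every integer k ≥ 2 and every complex number z, |(k² − 1)·|z|^k + (k+1)·z^k| + |(k² − 1)·|z|^k − (k−1)·z^k| ≤ 2k²·|z|^k. -/
/-- Auxiliary real inequality: tangent-line bounds at the equality point `t = r`. -/
lemma aux14 (K r t s A B : ℝ) (hK : 2 ≤ K) (hr0 : 0 < r)
    (hts : t ^ 2 + s ^ 2 = r ^ 2) (_hA0 : 0 ≤ A) (_hB0 : 0 ≤ B)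
    (hA2 : A ^ 2 = ((K ^ 2 - 1) * r + (K + 1) * t) ^ 2 + ((K + 1) * s) ^ 2)
    (hB2 : B ^ 2 = ((K ^ 2 - 1) * r - (K - 1) * t) ^ 2 + ((K - 1) * s) ^ 2) :
    A + B ≤ 2 * K ^ 2 * r := by
  have hcA : 0 < K * (K + 1) * r := by nlinarith
  have hcB : 0 < K * (K - 1) * r := by nlinarith
  have hA : A ≤ (A ^ 2 + (K * (K + 1) * r) ^ 2) / (2 * (K * (K + 1) * r)) := by
    rw [le_div_iff₀ (by positivity)]
    nlinarith [sq_nonneg (A - K * (K + 1) * r)]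
  have hB : B ≤ (B ^ 2 + (K * (K - 1) * r) ^ 2) / (2 * (K * (K - 1) * r)) := by
    rw [le_div_iff₀ (by positivity)]
    nlinarith [sq_nonneg (B - K * (K - 1) * r)]
  have hs2 : s ^ 2 = r ^ 2 - t ^ 2 := by linarith
  have key : (A ^ 2 + (K * (K + 1) * r) ^ 2) / (2 * (K * (K + 1) * r))
      + (B ^ 2 + (K * (K - 1) * r) ^ 2) / (2 * (K * (K - 1) * r)) = 2 * K ^ 2 * r := by
    rw [hA2, hB2, mul_pow (K + 1) s, mul_pow (K - 1) s, hs2]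
    field_simp [show K - 1 ≠ 0 by linarith]
    ring
  linarith

/-- for every integer `k ≥ 2` and complex `z`,
`|(k²−1)|z|^k + (k+1)z^k| + |(k²−1)|z|^k − (k−1)z^k| ≤ 2k²|z|^k`. -/
theorem stmt14 (k : ℕ) (hk : 2 ≤ k) (z : ℂ) :
    ‖(((k : ℝ) ^ 2 - 1) * ‖z‖ ^ k : ℝ) + ((k : ℂ) + 1) * z ^ k‖ +
        ‖(((k : ℝ) ^ 2 - 1) * ‖z‖ ^ k : ℝ) - ((k : ℂ) - 1) * z ^ k‖ ≤
      2 * (k : ℝ) ^ 2 * ‖z‖ ^ k := by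
  rcases eq_or_ne z 0 with rfl | hz
  · simp [zero_pow (by omega : k ≠ 0)]
  have hK : (2:ℝ) ≤ (k : ℝ) := by exact_mod_cast hk
  have hr0 : 0 < ‖z‖ ^ k := pow_pos (norm_pos_iff.mpr hz) k
  have hts : (z ^ k).re ^ 2 + (z ^ k).im ^ 2 = (‖z‖ ^ k) ^ 2 := by
    have h := Complex.sq_norm (z ^ k)
    rw [norm_pow] at h
    simpa [Complex.normSq_apply, sq] using h.symm
  refine aux14 (k : ℝ) (‖z‖ ^ k) (z ^ k).re (z ^ k).im _ _ hK hr0 hts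
    (norm_nonneg _) (norm_nonneg _) ?_ ?_
  · rw [Complex.sq_norm]
    simp only [Complex.normSq_apply, Complex.add_re, Complex.add_im, Complex.mul_re,
      Complex.mul_im, Complex.ofReal_re, Complex.ofReal_im, Complex.one_re, Complex.one_im,
      Complex.natCast_re, Complex.natCast_im]
    ring
  · rw [Complex.sq_norm]
    simp only [Complex.normSq_apply, Complex.sub_re, Complex.sub_im, Complex.mul_re,
      Complex.mul_im, Complex.ofReal_re, Complex.ofReal_im, Complex.one_re, Complex.one_im,
      Complex.natCast_re, Complex.natCast_im]
    ring
end

section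
/- Let Δ be a set of nonnegative integers containing 1 and containing some element d ≥ 3, and let ω(z) = Σ_{d∈Δ} z^d/d!. Then there exists exactly one real number ẑ > 0 satisfying ẑ·ω''(ẑ) = ω'(ẑ), i.e., the equation φ₁(z) = 1 has a unique positive real solution. -/
open scoped Nat

namespace Stmt16Aux

/-- Terms of the `k`-th derivative series, as a function on all of `ℕ`. -/
noncomputable def A (k d : ℕ) (z : ℝ) : ℝ :=
  if k ≤ d then z ^ (d - k) / Nat.factorial (d - k) else 0

/-- Terms of the series `z·ω'' − ω' + 1` (for `1 ∈ Δ`). -/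
noncomputable def g (d : ℕ) (z : ℝ) : ℝ :=
  if 3 ≤ d then ((d : ℝ) - 2) * z ^ (d - 1) / Nat.factorial (d - 1) else 0

lemma summable_A (k : ℕ) (z : ℝ) : Summable (fun d => A k d z) := by
  rw [← summable_nat_add_iff k]
  have h : (fun n => A k (n + k) z) = fun n => z ^ n / Nat.factorial n := by
    funext n
    simp [A, Nat.le_add_left, Nat.add_sub_cancel]
  rw [h]
  exact Real.summable_pow_div_factorial z

lemma g_nonneg {d : ℕ} {z : ℝ} (hz : 0 ≤ z) : 0 ≤ g d z := by
  unfold g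
  split
  · rename_i h
    have h2 : (0:ℝ) ≤ (d : ℝ) - 2 := by
      have : (3:ℝ) ≤ (d:ℝ) := by exact_mod_cast h
      linarith
    positivity
  · exact le_refl 0

lemma summable_g (z : ℝ) (hz : 0 ≤ z) : Summable (fun d => g d z) := by
  rw [← summable_nat_add_iff 3]
  apply Summable.of_nonneg_of_le (fun n => g_nonneg hz)
  · intro n
    show g (n + 3) z ≤ z * (z ^ (n + 1) / Nat.factorial (n + 1))
    have h3 : 3 ≤ n + 3 := by omega
    have hd1 : n + 3 - 1 = n + 2 := by omega
    have hc : ((n + 3 : ℕ) : ℝ) - 2 = (n : ℝ) + 1 := by push_cast; ring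
    rw [g, if_pos h3, hd1, hc]
    have hfpos : (0:ℝ) < Nat.factorial (n + 1) := by positivity
    have hfact : (Nat.factorial (n + 2) : ℝ) = ((n:ℝ) + 2) * Nat.factorial (n + 1) := by
      rw [show n + 2 = (n + 1) + 1 from rfl, Nat.factorial_succ]
      push_cast; ring
    rw [hfact]
    rw [div_le_iff₀ (by positivity)]
    have hzp : 0 ≤ z ^ (n + 2) := by positivity
    have : ((n:ℝ) + 1) * z ^ (n + 2) ≤ ((n:ℝ) + 2) * z ^ (n + 2) := by nlinarith
    calc ((n : ℝ) + 1) * z ^ (n + 2) ≤ ((n:ℝ) + 2) * z ^ (n + 2) := this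
      _ = z * (z ^ (n + 1) / Nat.factorial (n + 1)) * (((n:ℝ) + 2) * Nat.factorial (n + 1)) := by
          field_simp
          ring
  · exact ((summable_nat_add_iff 1).2 (Real.summable_pow_div_factorial z)).mul_left z

/-- The pointwise identity `z·A₂ − A₁ = g − 𝟙[d=1]`. -/
lemma key (d : ℕ) (z : ℝ) :
    z * A 2 d z - A 1 d z = g d z - (if d = 1 then 1 else 0) := by
  match d with
  | 0 => simp [A, g]
  | 1 => simp [A, g]
  | 2 => norm_num [A, g]
  | (n + 3) =>
    have h1 : 1 ≤ n + 3 := by omega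
    have h2 : 2 ≤ n + 3 := by omega
    have h3 : 3 ≤ n + 3 := by omega
    rw [A, A, g, if_pos h1, if_pos h2, if_pos h3, if_neg (by omega)]
    have e1 : n + 3 - 1 = n + 2 := by omega
    have e2 : n + 3 - 2 = n + 1 := by omega
    rw [e1, e2]
    have hc : ((n + 3 : ℕ) : ℝ) - 2 = (n : ℝ) + 1 := by push_cast; ring
    rw [hc]
    have hfact : (Nat.factorial (n + 2) : ℝ) = ((n:ℝ) + 2) * Nat.factorial (n + 1) := by
      rw [show n + 2 = (n + 1) + 1 from rfl, Nat.factorial_succ]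
      push_cast; ring
    have hfpos : (0:ℝ) < Nat.factorial (n + 1) := by positivity
    rw [hfact]
    have hzz : z * z ^ (n + 1) = z ^ (n + 2) := by ring
    field_simp
    ring

lemma g_mono {x y : ℝ} (hx : 0 ≤ x) (hxy : x ≤ y) (d : ℕ) : g d x ≤ g d y := by
  unfold g
  split
  · rename_i h
    have h2 : (0:ℝ) ≤ (d : ℝ) - 2 := by
      have : (3:ℝ) ≤ (d:ℝ) := by exact_mod_cast h
      linarith
    have : x ^ (d - 1) ≤ y ^ (d - 1) := pow_le_pow_left₀ hx hxy _
    have hfpos : (0:ℝ) < Nat.factorial (d - 1) := by positivity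
    rw [div_le_div_iff₀ hfpos hfpos]
    nlinarith [mul_le_mul_of_nonneg_left this h2, hfpos.le]
  · exact le_refl 0

lemma g_strict {x y : ℝ} (hx : 0 ≤ x) (hxy : x < y) {d : ℕ} (hd : 3 ≤ d) :
    g d x < g d y := by
  unfold g
  rw [if_pos hd, if_pos hd]
  have h2 : (0:ℝ) < (d : ℝ) - 2 := by
    have : (3:ℝ) ≤ (d:ℝ) := by exact_mod_cast hd
    linarith
  have hne : d - 1 ≠ 0 := by omega
  have : x ^ (d - 1) < y ^ (d - 1) := pow_lt_pow_left₀ hxy hx hne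
  have hfpos : (0:ℝ) < Nat.factorial (d - 1) := by positivity
  apply div_lt_div_of_pos_right ?_ hfpos
  nlinarith

end Stmt16Aux

namespace Stmt16Aux

/-- `G Δ z = Σ_{d ∈ Δ} g d z`. -/
noncomputable def G (Δ : Set ℕ) (z : ℝ) : ℝ := ∑' d : Δ, g (d : ℕ) z

lemma omegaD_eq (Δ : Set ℕ) (k : ℕ) (z : ℝ) :
    omegaD Δ k z = ∑' d : Δ, A k (d : ℕ) z := rfl

/-- The main identity: for `1 ∈ Δ` and `z : ℝ`,
    `z·ω''(z) − ω'(z) = G(z) − 1`. -/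
lemma main_identity (Δ : Set ℕ) (h1 : 1 ∈ Δ) {z : ℝ} (hz : 0 ≤ z) :
    z * omegaD Δ 2 z - omegaD Δ 1 z = G Δ z - 1 := by
  have hA1 : Summable (fun d : Δ => A 1 (d : ℕ) z) := (summable_A 1 z).subtype Δ
  have hA2 : Summable (fun d : Δ => z * A 2 (d : ℕ) z) :=
    (((summable_A 2 z).subtype Δ)).mul_left z
  have hg : Summable (fun d : Δ => g (d : ℕ) z) := (summable_g z hz).subtype Δ
  have he : Summable (fun d : Δ => if (d : ℕ) = 1 then (1:ℝ) else 0) := by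
    have : (fun d : Δ => if (d : ℕ) = 1 then (1:ℝ) else 0)
        = fun d : Δ => if d = (⟨1, h1⟩ : Δ) then (1:ℝ) else 0 := by
      funext d
      congr 1
      simp [Subtype.ext_iff]
    rw [this]
    exact summable_of_ne_finset_zero (s := {(⟨1, h1⟩ : Δ)}) (by
      intro b hb
      simp only [Finset.mem_singleton] at hb
      simp [hb])
  have hesum : ∑' d : Δ, (if (d : ℕ) = 1 then (1:ℝ) else 0) = 1 := by
    have : (fun d : Δ => if (d : ℕ) = 1 then (1:ℝ) else 0)
        = fun d : Δ => if d = (⟨1, h1⟩ : Δ) then (1:ℝ) else 0 := by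
      funext d
      congr 1
      simp [Subtype.ext_iff]
    rw [this]
    exact tsum_ite_eq _ _
  calc z * omegaD Δ 2 z - omegaD Δ 1 z
      = ∑' d : Δ, z * A 2 (d : ℕ) z - ∑' d : Δ, A 1 (d : ℕ) z := by
        rw [omegaD_eq, omegaD_eq, tsum_mul_left]
    _ = ∑' d : Δ, (z * A 2 (d : ℕ) z - A 1 (d : ℕ) z) := (Summable.tsum_sub hA2 hA1).symm
    _ = ∑' d : Δ, (g (d : ℕ) z - (if (d : ℕ) = 1 then 1 else 0)) := by
        congr 1; funext d; exact key (d : ℕ) z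
    _ = ∑' d : Δ, g (d : ℕ) z - ∑' d : Δ, (if (d : ℕ) = 1 then (1:ℝ) else 0) :=
        Summable.tsum_sub hg he
    _ = G Δ z - 1 := by rw [hesum]; rfl

lemma G_strictMonoOn (Δ : Set ℕ) {d0 : ℕ} (hd0 : d0 ∈ Δ) (hd03 : 3 ≤ d0) :
    StrictMonoOn (G Δ) (Set.Ici 0) := by
  intro x hx y hy hxy
  have hx0 : (0:ℝ) ≤ x := hx
  exact Summable.tsum_lt_tsum (f := fun d : Δ => g (d : ℕ) x) (i := (⟨d0, hd0⟩ : Δ))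
    (fun d => g_mono hx0 hxy.le _)
    (g_strict hx0 hxy hd03)
    ((summable_g x hx0).subtype Δ)
    ((summable_g y (hx0.trans hxy.le)).subtype Δ)

lemma G_continuousOn (Δ : Set ℕ) (M : ℝ) (hM : 0 ≤ M) :
    ContinuousOn (G Δ) (Set.Icc 0 M) := by
  apply continuousOn_tsum (u := fun d : Δ => g (d : ℕ) M)
  · intro d
    have hfe : (g (d : ℕ)) = fun z : ℝ =>
        if 3 ≤ (d : ℕ) then (((d : ℕ) : ℝ) - 2) * z ^ ((d : ℕ) - 1) / Nat.factorial ((d : ℕ) - 1)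
        else 0 := rfl
    rw [hfe]
    by_cases h : 3 ≤ (d : ℕ)
    · simp only [h, if_true]; fun_prop
    · simp only [h, if_false]; fun_prop
  · exact (summable_g M hM).subtype Δ
  · intro d x hx
    rw [Real.norm_eq_abs, abs_of_nonneg (g_nonneg hx.1)]
    exact g_mono hx.1 hx.2 _

lemma G_zero (Δ : Set ℕ) : G Δ 0 = 0 := by
  unfold G
  convert tsum_zero with d
  unfold g
  split
  · rename_i h
    rw [zero_pow (by omega)]
    ring
  · rfl

end Stmt16Aux

open Stmt16Aux in
/-- if `1 ∈ Δ` and `Δ` contains some `d ≥ 3`, the equation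
`φ₁(z) = 1`, i.e. `z·ω''(z) = ω'(z)`, has exactly one positive real solution. -/
theorem stmt16 (Δ : Set ℕ) (h1 : 1 ∈ Δ) (h3 : ∃ d ∈ Δ, 3 ≤ d) :
    ∃! z : ℝ, 0 < z ∧ z * omegaD Δ 2 z = omegaD Δ 1 z := by
  obtain ⟨d0, hd0, hd03⟩ := h3
  -- choose a large `y` with `G Δ y > 1`
  set y : ℝ := (Nat.factorial (d0 - 1) : ℝ) + 1 with hy
  have hfpos : (0:ℝ) < Nat.factorial (d0 - 1) := by positivity
  have hy1 : (1:ℝ) ≤ y := by rw [hy]; linarith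
  have hy0 : (0:ℝ) ≤ y := by linarith
  have hGy : 1 < G Δ y := by
    have hterm : g d0 y ≤ G Δ y :=
      Summable.le_tsum ((summable_g y hy0).subtype Δ) (⟨d0, hd0⟩ : Δ)
        (fun j _ => g_nonneg hy0)
    have hgy : 1 < g d0 y := by
      rw [g, if_pos hd03]
      have hc : (1:ℝ) ≤ (d0 : ℝ) - 2 := by
        have : (3:ℝ) ≤ (d0:ℝ) := by exact_mod_cast hd03
        linarith
      have hyp : y ≤ y ^ (d0 - 1) := by
        calc y = y ^ 1 := (pow_one y).symm
          _ ≤ y ^ (d0 - 1) := pow_le_pow_right₀ hy1 (by omega)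
      rw [lt_div_iff₀ hfpos]
      nlinarith
    linarith
  -- IVT
  have hIVT := intermediate_value_Icc hy0 (G_continuousOn Δ y hy0)
  have h1mem : (1:ℝ) ∈ Set.Icc (G Δ 0) (G Δ y) := by
    rw [G_zero]
    exact ⟨by norm_num, hGy.le⟩
  obtain ⟨zh, hzh, hGzh⟩ := hIVT h1mem
  have hzpos : 0 < zh := by
    rcases lt_or_eq_of_le hzh.1 with h | h
    · exact h
    · exfalso
      rw [← h, G_zero] at hGzh
      norm_num at hGzh
  have hsm := G_strictMonoOn Δ hd0 hd03
  refine ⟨zh, ⟨hzpos, ?_⟩, ?_⟩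
  · have := main_identity Δ h1 (z := zh) hzpos.le
    rw [hGzh] at this
    linarith
  · rintro z' ⟨hz'pos, hz'eq⟩
    have hid := main_identity Δ h1 (z := z') hz'pos.le
    rw [hz'eq] at hid
    have hGz' : G Δ z' = 1 := by linarith
    exact hsm.injOn hz'pos.le hzpos.le (by rw [hGz', hGzh])
end

section
/- Let z > 0 be a real number with φ₀(z) < 2, and let r ∈ ℝ. Define h(z; r) = log ω'(z) − r·log z + (1 − r)·log(2ω(z)/ω'(z) − z). Then the partial derivative of h with respect to z satisfies ∂h/∂z (z; r) = (φ₀(z) − 2r)·(φ₁(z) − 1) / ( z·(φ₀(z) − 2) ). -/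
/-- `φ₀(z) = z ω'(z)/ω(z)`. -/
noncomputable def phi0 (Δ : Set ℕ) (z : ℝ) : ℝ := z * omegaD Δ 1 z / omegaD Δ 0 z

/-- `φ₁(z) = z ω''(z)/ω'(z)`. -/
noncomputable def phi1 (Δ : Set ℕ) (z : ℝ) : ℝ := z * omegaD Δ 2 z / omegaD Δ 1 z

open Set

noncomputable def omegaF (Δ : Set ℕ) (k : ℕ) (n : ℕ) (z : ℝ) : ℝ :=
  Set.indicator Δ (fun d => if k ≤ d then z ^ (d - k) / Nat.factorial (d - k) else 0) n

lemma omegaD_eq (Δ : Set ℕ) (k : ℕ) (z : ℝ) :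
    omegaD Δ k z = ∑' n : ℕ, omegaF Δ k n z :=
  tsum_subtype Δ (fun d => if k ≤ d then z ^ (d - k) / Nat.factorial (d - k) else 0)

lemma summable_u (k : ℕ) (R : ℝ) :
    Summable (fun n : ℕ => if k ≤ n then R ^ (n - k) / (Nat.factorial (n - k) : ℝ) else 0) := by
  rw [← summable_nat_add_iff k]
  simpa using Real.summable_pow_div_factorial R

lemma omegaF_norm_le (Δ : Set ℕ) (k n : ℕ) (z R : ℝ) (hR : |z| ≤ R) :
    ‖omegaF Δ k n z‖ ≤ (if k ≤ n then R ^ (n - k) / (Nat.factorial (n - k) : ℝ) else 0) := by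
  have hR0 : 0 ≤ R := le_trans (abs_nonneg z) hR
  rw [omegaF]
  by_cases hn : n ∈ Δ
  · rw [Set.indicator_of_mem hn]
    by_cases hk : k ≤ n
    · simp only [hk, if_true]
      rw [Real.norm_eq_abs, abs_div, abs_pow, Nat.abs_cast]
      gcongr
    · simp [hk]
  · rw [Set.indicator_of_notMem hn]
    simp only [norm_zero]
    split_ifs with hk
    · positivity
    · exact le_refl 0

lemma summable_omegaF (Δ : Set ℕ) (k : ℕ) (z : ℝ) :
    Summable (fun n => omegaF Δ k n z) :=
  Summable.of_norm_bounded (summable_u k |z|) (fun n => omegaF_norm_le Δ k n z |z| le_rfl)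

lemma hasDerivAt_omegaF (Δ : Set ℕ) (k n : ℕ) (y : ℝ) :
    HasDerivAt (fun t => omegaF Δ k n t) (omegaF Δ (k+1) n y) y := by
  unfold omegaF
  by_cases hn : n ∈ Δ
  · simp only [Set.indicator_of_mem hn]
    by_cases hk1 : k + 1 ≤ n
    · have hk : k ≤ n := le_trans (Nat.le_succ k) hk1
      simp only [hk, hk1, if_true]
      have hm : n - k = (n - (k+1)) + 1 := by omega
      rw [hm]
      set m := n - (k+1) with hmdef
      have := (hasDerivAt_pow (m + 1) y).div_const (Nat.factorial (m + 1) : ℝ)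
      refine this.congr_deriv ?_
      have h1 : ((m + 1 : ℕ) : ℝ) ≠ 0 := Nat.cast_ne_zero.mpr (Nat.succ_ne_zero m)
      rw [Nat.add_sub_cancel, Nat.factorial_succ, Nat.cast_mul, mul_div_mul_left _ _ h1]
    · by_cases hk : k ≤ n
      · have hkn : n = k := by omega
        simp only [hk, hk1, if_true, if_false, hkn, Nat.sub_self, pow_zero, Nat.factorial_zero]
        simpa using hasDerivAt_const y (1 : ℝ)
      · simp only [hk, hk1, if_false]
        exact hasDerivAt_const y 0
  · simp only [Set.indicator_of_notMem hn]
    exact hasDerivAt_const y 0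

lemma hasDerivAt_omegaD (Δ : Set ℕ) (k : ℕ) (z : ℝ) :
    HasDerivAt (fun t => omegaD Δ k t) (omegaD Δ (k+1) z) z := by
  have hzmem : z ∈ Metric.ball (0:ℝ) (|z|+1) := by
    simp only [Metric.mem_ball, Real.dist_eq, sub_zero]
    linarith [abs_nonneg z]
  have key := hasDerivAt_tsum_of_isPreconnected (summable_u (k+1) (|z|+1))
    Metric.isOpen_ball (convex_ball (0:ℝ) (|z|+1)).isPreconnected
    (fun n y _ => hasDerivAt_omegaF Δ k n y)
    (fun n y hy => omegaF_norm_le Δ (k+1) n y (|z|+1) (by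
      simp only [Metric.mem_ball, Real.dist_eq, sub_zero] at hy
      linarith))
    hzmem (summable_omegaF Δ k z) hzmem
  have h1 : (fun t => omegaD Δ k t) = fun t => ∑' n : ℕ, omegaF Δ k n t := by
    funext t; exact omegaD_eq Δ k t
  rw [h1, omegaD_eq]
  exact key

lemma omegaF_nonneg (Δ : Set ℕ) (k n : ℕ) (z : ℝ) (hz : 0 ≤ z) : 0 ≤ omegaF Δ k n z := by
  unfold omegaF
  by_cases hn : n ∈ Δ
  · rw [Set.indicator_of_mem hn]; split_ifs <;> positivity
  · rw [Set.indicator_of_notMem hn]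

lemma omegaD_pos (Δ : Set ℕ) (h1 : 1 ∈ Δ) (z : ℝ) (hz : 0 < z) (k : ℕ) (hk : k ≤ 1) :
    0 < omegaD Δ k z := by
  rw [omegaD_eq]
  have h := Summable.le_tsum (summable_omegaF Δ k z) 1 (fun n _ => omegaF_nonneg Δ k n z hz.le)
  have hterm : 0 < omegaF Δ k 1 z := by
    unfold omegaF
    rw [Set.indicator_of_mem h1]
    interval_cases k
    · simpa using hz
    · norm_num
  linarith


/-- for real `z > 0` with `φ₀(z) < 2`, the function
`h(·; r) = log ω' − r log(·) + (1−r) log(2ω/ω' − ·)` has derivative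
`(φ₀(z) − 2r)(φ₁(z) − 1)/(z(φ₀(z) − 2))` at `z`. -/
theorem stmt17 (Δ : Set ℕ) (h1 : 1 ∈ Δ) (z : ℝ) (hz : 0 < z)
    (hφ : phi0 Δ z < 2) (r : ℝ) :
    HasDerivAt (fun t : ℝ => Real.log (omegaD Δ 1 t) - r * Real.log t +
        (1 - r) * Real.log (2 * omegaD Δ 0 t / omegaD Δ 1 t - t))
      ((phi0 Δ z - 2 * r) * (phi1 Δ z - 1) / (z * (phi0 Δ z - 2))) z := by
  set A := omegaD Δ 0 z with hAdef
  set B := omegaD Δ 1 z with hBdef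
  set C := omegaD Δ 2 z with hCdef
  have hA : 0 < A := omegaD_pos Δ h1 z hz 0 (by norm_num)
  have hB : 0 < B := omegaD_pos Δ h1 z hz 1 le_rfl
  have hzB : z * B < 2 * A := by
    have : z * B / A < 2 := hφ
    calc z * B = z * B / A * A := by field_simp
    _ < 2 * A := by exact mul_lt_mul_of_pos_right this hA
  have hg : 0 < 2 * A / B - z := by
    rw [sub_pos, lt_div_iff₀ hB]
    linarith
  have hA' : HasDerivAt (fun t => omegaD Δ 0 t) B z := hasDerivAt_omegaD Δ 0 z
  have hB' : HasDerivAt (fun t => omegaD Δ 1 t) C z := hasDerivAt_omegaD Δ 1 z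
  have d1 : HasDerivAt (fun t => Real.log (omegaD Δ 1 t)) (C / B) z := hB'.log hB.ne'
  have d2 : HasDerivAt (fun t => r * Real.log t) (r * z⁻¹) z :=
    (Real.hasDerivAt_log hz.ne').const_mul r
  have dq : HasDerivAt (fun t => 2 * omegaD Δ 0 t / omegaD Δ 1 t)
      ((2 * B * B - 2 * A * C) / B ^ 2) z :=
    (hA'.const_mul 2).div hB' hB.ne'
  have dg : HasDerivAt (fun t => 2 * omegaD Δ 0 t / omegaD Δ 1 t - t)
      ((2 * B * B - 2 * A * C) / B ^ 2 - 1) z := dq.sub (hasDerivAt_id z)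
  have d3 : HasDerivAt (fun t => (1 - r) * Real.log (2 * omegaD Δ 0 t / omegaD Δ 1 t - t))
      ((1 - r) * (((2 * B * B - 2 * A * C) / B ^ 2 - 1) / (2 * A / B - z))) z :=
    (dg.log hg.ne').const_mul (1 - r)
  have final := (d1.sub d2).add d3
  refine final.congr_deriv ?_
  symm
  rw [phi0, phi1, ← hAdef, ← hBdef, ← hCdef]
  have hZB2A : z * B - 2 * A ≠ 0 := by nlinarith
  have e1 : (z * B / A - 2 * r) * (z * C / B - 1) / (z * (z * B / A - 2)) =
      (z * B - 2 * r * A) * (z * C - B) / (z * B * (z * B - 2 * A)) := by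
    rw [div_eq_div_iff]
    · field_simp
    · have h2 : z * B / A - 2 ≠ 0 := by
        rw [sub_ne_zero]
        exact ne_of_lt hφ
      exact mul_ne_zero hz.ne' h2
    · exact mul_ne_zero (mul_ne_zero hz.ne' hB.ne') hZB2A
  have h2AzB : 2 * A - z * B ≠ 0 := by nlinarith
  have e2 : ((2 * B * B - 2 * A * C) / B ^ 2 - 1) / (2 * A / B - z) =
      (2 * B * B - 2 * A * C - B ^ 2) / (B * (2 * A - z * B)) := by
    rw [div_eq_div_iff hg.ne' (mul_ne_zero hB.ne' h2AzB)]
    field_simp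
  rw [e1, e2, div_eq_iff (mul_ne_zero (mul_ne_zero hz.ne' hB.ne') hZB2A)]
  field_simp
  ring
end
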